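/- arXiv:2410.18268 — 3 statements merged into one kernel-verified Lean document; each statement's English description precedes it below -/
import Mathlib

section
/- For any weight vector w in the probability simplex Δ_{k-1} and any ε > 0, the inflated argmax set argmaxᵉ(w) = {m : dist(w, R_mᵉ) < ε} is nonempty, where R_mᵉ = {q ∈ Δ_{k-1} : q_m ≥ max_{m'≠m} q_{m'} + ε/√2} and dist denotes Euclidean distance. -/
open scoped BigOperators

noncomputable section

def probSimplex (k : ℕ) : Set (EuclideanSpace ℝ (Fin k)) :=
  {w | (∀ i, 0 ≤ w i) ∧ ∑ i, w i = 1}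

def region (k : ℕ) (ε : ℝ) (m : Fin k) : Set (EuclideanSpace ℝ (Fin k)) :=
  {q | q ∈ probSimplex k ∧ ∀ j, j ≠ m → q j + ε / Real.sqrt 2 ≤ q m}

def infArgmax (k : ℕ) (ε : ℝ) (w : EuclideanSpace ℝ (Fin k)) : Set (Fin k) :=
  {m | Metric.infDist w (region k ε m) < ε}

theorem inflated_argmax_nonempty (k : ℕ) (hk : 2 ≤ k) (ε : ℝ) (hε : 0 < ε)
    (hε2 : ε / Real.sqrt 2 ≤ 1)
    (w : EuclideanSpace ℝ (Fin k)) (hw : w ∈ probSimplex k) :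
    (infArgmax k ε w).Nonempty := by
  obtain ⟨hpos, hsum⟩ := hw
  have hkpos : 0 < k := by omega
  have hs2 : (1:ℝ) < Real.sqrt 2 := by
    have := Real.sqrt_lt_sqrt (by norm_num : (0:ℝ) ≤ 1) (by norm_num : (1:ℝ) < 2)
    simpa using this
  set c : ℝ := ε / Real.sqrt 2 with hc
  have hcpos : 0 < c := div_pos hε (by linarith)
  have hclt : c < ε := div_lt_self hε hs2
  obtain ⟨m, -, hm⟩ := Finset.exists_max_image Finset.univ w ⟨⟨0, hkpos⟩, Finset.mem_univ _⟩
  refine ⟨m, ?_⟩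
  set q : EuclideanSpace ℝ (Fin k) :=
    WithLp.toLp 2 (fun j => (1 - c) * w j + c * (if j = m then 1 else 0)) with hq
  have hqmem : q ∈ region k ε m := by
    refine ⟨⟨fun i => ?_, ?_⟩, fun j hj => ?_⟩
    · have h1 : 0 ≤ (1 - c) * w i := mul_nonneg (by linarith) (hpos i)
      have h2 : 0 ≤ c * (if i = m then (1:ℝ) else 0) := by
        split <;> [linarith; simp]
      simpa [hq] using add_nonneg h1 h2
    · have : ∑ j, ((1 - c) * w j + c * (if j = m then (1:ℝ) else 0)) = 1 := by
        rw [Finset.sum_add_distrib, ← Finset.mul_sum, ← Finset.mul_sum, hsum,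
          Finset.sum_ite_eq' Finset.univ m fun _ => (1:ℝ)]
        simp
      simpa [hq] using this
    · have hwm := hm j (Finset.mem_univ j)
      have h3 : (1 - c) * w j ≤ (1 - c) * w m :=
        mul_le_mul_of_nonneg_left hwm (by linarith)
      show (1 - c) * w j + c * (if j = m then (1:ℝ) else 0) + ε / Real.sqrt 2
          ≤ (1 - c) * w m + c * (if m = m then (1:ℝ) else 0)
      rw [if_neg hj, if_pos rfl, ← hc]
      linarith
  have hdist : dist w q ≤ c := by
    have hsq : ∀ i, dist (w i) (q i) ^ 2 = c ^ 2 * (w i - (if i = m then 1 else 0)) ^ 2 := by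
      intro i
      rw [Real.dist_eq, sq_abs]
      show (w i - ((1 - c) * w i + c * (if i = m then (1:ℝ) else 0))) ^ 2 = _
      split <;> ring
    have hbound : ∑ i, (w i - (if i = m then (1:ℝ) else 0)) ^ 2 ≤ 1 := by
      have hsplit : ∑ i, (w i - (if i = m then (1:ℝ) else 0)) ^ 2
          = (w m - 1) ^ 2 + ∑ i ∈ Finset.univ.erase m, (w i) ^ 2 := by
        rw [← Finset.add_sum_erase Finset.univ _ (Finset.mem_univ m)]
        simp only [if_pos rfl]
        congr 1
        refine Finset.sum_congr rfl fun i hi => ?_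
        rw [if_neg (Finset.ne_of_mem_erase hi)]
        ring
      have hA : ∑ i ∈ Finset.univ.erase m, w i = 1 - w m := by
        have := Finset.sum_erase_add Finset.univ w (Finset.mem_univ m)
        rw [hsum] at this
        linarith
      have hsqle : ∑ i ∈ Finset.univ.erase m, (w i) ^ 2
          ≤ ∑ i ∈ Finset.univ.erase m, w m * w i := by
        refine Finset.sum_le_sum fun i _ => ?_
        have := hm i (Finset.mem_univ i)
        nlinarith [hpos i]
      rw [← Finset.mul_sum, hA] at hsqle
      have hwm0 := hpos m
      rw [hsplit]
      nlinarith
    rw [EuclideanSpace.dist_eq]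
    have : ∑ i, dist (w i) (q i) ^ 2 ≤ c ^ 2 := by
      calc ∑ i, dist (w i) (q i) ^ 2
          = c ^ 2 * ∑ i, (w i - (if i = m then (1:ℝ) else 0)) ^ 2 := by
            rw [Finset.mul_sum]; exact Finset.sum_congr rfl fun i _ => hsq i
        _ ≤ c ^ 2 * 1 := by
            exact mul_le_mul_of_nonneg_left hbound (by positivity)
        _ = c ^ 2 := mul_one _
    calc Real.sqrt (∑ i, dist (w i) (q i) ^ 2) ≤ Real.sqrt (c ^ 2) :=
          Real.sqrt_le_sqrt this
      _ = c := Real.sqrt_sq hcpos.le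
  show Metric.infDist w (region k ε m) < ε
  exact lt_of_le_of_lt ((Metric.infDist_le_dist_of_mem hqmem).trans hdist) hclt
end
end

section
/- If w ∈ Δ_{k-1} has a unique maximizer m with margin w_m − max_{j≠m} w_j ≥ ε/√2 + ε·√2 (a sufficiently large gap), then the inflated argmax is the singleton {m}: argmaxᵉ(w) = {m}. -/
open scoped BigOperators

noncomputable section

theorem inflated_argmax_singleton_of_margin (k : ℕ) (hk : 2 ≤ k) (ε : ℝ) (hε : 0 < ε)
    (hε2 : ε / Real.sqrt 2 ≤ 1)
    (w : EuclideanSpace ℝ (Fin k)) (hw : w ∈ probSimplex k) (m : Fin k)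
    (hmargin : ∀ j, j ≠ m → w j + (ε / Real.sqrt 2 + ε * Real.sqrt 2) ≤ w m) :
    infArgmax k ε w = {m} := by
  have hs2 : (0:ℝ) < Real.sqrt 2 := by positivity
  have hsle : 0 ≤ ε / Real.sqrt 2 := by positivity
  ext m'
  simp only [infArgmax, Set.mem_setOf_eq, Set.mem_singleton_iff]
  constructor
  · intro hlt
    by_contra hne
    -- region k ε m' is nonempty
    set s := ε / Real.sqrt 2 with hs
    set c := (1 - s) / k with hc
    have hk0 : (0:ℝ) < k := by positivity
    have hc0 : 0 ≤ c := by
      apply div_nonneg (by linarith) hk0.le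
    set q : EuclideanSpace ℝ (Fin k) := WithLp.toLp 2 (fun j => c + if j = m' then s else 0) with hq
    have hqmem : q ∈ region k ε m' := by
      refine ⟨⟨fun i => ?_, ?_⟩, fun j hj => ?_⟩
      · show 0 ≤ c + if i = m' then s else 0
        split <;> linarith
      · show ∑ i, (c + if i = m' then s else 0) = 1
        rw [Finset.sum_add_distrib, Finset.sum_const, Finset.sum_ite_eq']
        simp [hc]
        field_simp
        ring
      · show (c + if j = m' then s else 0) + s ≤ c + if m' = m' then s else 0
        simp [hj]
    -- every point of region k ε m' is at distance ≥ ε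
    obtain ⟨y, hy, hdy⟩ := (Metric.infDist_lt_iff ⟨q, hqmem⟩).1 hlt
    have hge : ε ≤ dist w y := by
      obtain ⟨⟨hy0, hy1⟩, hyreg⟩ := hy
      have h1 : y m + ε / Real.sqrt 2 ≤ y m' := hyreg m (fun h => hne h.symm)
      have h2 : w m' + (ε / Real.sqrt 2 + ε * Real.sqrt 2) ≤ w m := hmargin m' hne
      set a := w m - y m
      set b := y m' - w m'
      have hab : ε * Real.sqrt 2 ≤ a + b := by
        have h2' : Real.sqrt 2 * Real.sqrt 2 = 2 := Real.mul_self_sqrt (by norm_num)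
        have : ε / Real.sqrt 2 = ε * Real.sqrt 2 / 2 := by
          rw [div_eq_div_iff hs2.ne' (by norm_num : (2:ℝ) ≠ 0)]
          nlinarith [h2']
        unfold a b
        nlinarith [h1, h2]
      have hd : dist w y = Real.sqrt (∑ i, dist (w i) (y i) ^ 2) := by
        rw [EuclideanSpace.dist_eq]
      rw [hd]
      rw [Real.le_sqrt (by positivity)]
      have hsum : dist (w m) (y m) ^ 2 + dist (w m') (y m') ^ 2 ≤ ∑ i, dist (w i) (y i) ^ 2 := by
        have hmm' : m ≠ m' := fun h => hne h.symm
        calc dist (w m) (y m) ^ 2 + dist (w m') (y m') ^ 2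
            = ∑ i ∈ ({m, m'} : Finset (Fin k)), dist (w i) (y i) ^ 2 := by
              rw [Finset.sum_pair hmm']
          _ ≤ ∑ i, dist (w i) (y i) ^ 2 := by
              apply Finset.sum_le_sum_of_subset_of_nonneg (Finset.subset_univ _)
              intro i _ _; positivity
      refine le_trans ?_ hsum
      have hda : a ≤ |w m - y m| := le_abs_self _
      have hdb : b ≤ |y m' - w m'| := le_abs_self _
      have e1 : dist (w m) (y m) = |w m - y m| := Real.dist_eq _ _
      have e2 : dist (w m') (y m') = |y m' - w m'| := by
        rw [Real.dist_eq, abs_sub_comm]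
      rw [e1, e2]
      have h2' : Real.sqrt 2 * Real.sqrt 2 = 2 := Real.mul_self_sqrt (by norm_num)
      have hab2 : ε * Real.sqrt 2 ≤ |w m - y m| + |y m' - w m'| := by linarith
      have hsq : (ε * Real.sqrt 2) ^ 2 ≤ (|w m - y m| + |y m' - w m'|) ^ 2 := by
        apply pow_le_pow_left₀ (by positivity) hab2
      nlinarith [hsq, sq_nonneg (|w m - y m| - |y m' - w m'|), h2', hε.le]
      positivity
    linarith
  · intro h
    subst h
    have hwmem : w ∈ region k ε m' := by
      refine ⟨hw, fun j hj => ?_⟩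
      have := hmargin j hj
      nlinarith [mul_pos hε hs2]
    rw [Metric.infDist_zero_of_mem hwmem]
    exact hε
end
end

section
/- Bagged weights differ little under leave-one-out resampling in expectation: if w^{∖i} denotes the (infinite-bag) subbagged weight vector computed from the dataset with sample i removed and w the subbagged weights on the full dataset of size n with bag size K < n, then averaging over i, (1/n)Σᵢ ‖w − w^{∖i}‖₂² ≤ (1/(n−1))·(ρ/(1−ρ))·(1 − 1/k) where ρ = K/n and k is the number of candidate models, provided each base weight vector lies in the probability simplex Δ_{k-1}. -/
open scoped BigOperators

noncomputable section

/-- Infinite-ensemble subbagged weights: average of the base algorithm's output over all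
bags (subsets of the index set `I`) of size `K`. -/
def subbagWeights {n k : ℕ} (A : Finset (Fin n) → EuclideanSpace ℝ (Fin k))
    (I : Finset (Fin n)) (K : ℕ) : EuclideanSpace ℝ (Fin k) :=
  (((I.powersetCard K).card : ℝ)⁻¹) • ∑ S ∈ I.powersetCard K, A S

section Aux
open Finset

lemma card_filter_superset {n K : ℕ} (P : Finset (Fin n)) (hPK : P.card ≤ K) :
    (((univ : Finset (Fin n)).powersetCard K).filter (fun R => P ⊆ R)).card
      = (n - P.card).choose (K - P.card) := by
  have h : (((univ : Finset (Fin n)).powersetCard K).filter (fun R => P ⊆ R)).card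
      = ((univ \ P).powersetCard (K - P.card)).card := by
    apply Finset.card_bij' (fun R _ => R \ P) (fun R _ => R ∪ P)
    · intro R hR
      simp only [mem_filter, Finset.mem_powersetCard] at hR
      rw [Finset.mem_powersetCard]
      exact ⟨Finset.sdiff_subset_sdiff hR.1.1 (le_refl P),
        by rw [Finset.card_sdiff_of_subset hR.2, hR.1.2]⟩
    · intro R hR
      rw [Finset.mem_powersetCard] at hR
      have hdisj : Disjoint R P := Finset.disjoint_of_subset_left hR.1 Finset.sdiff_disjoint
      simp only [mem_filter, Finset.mem_powersetCard]
      refine ⟨⟨Finset.subset_univ _, ?_⟩, Finset.subset_union_right⟩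
      rw [Finset.card_union_of_disjoint hdisj, hR.2]
      omega
    · intro R hR
      simp only [mem_filter] at hR
      exact Finset.sdiff_union_of_subset hR.2
    · intro R hR
      rw [Finset.mem_powersetCard] at hR
      have hdisj : Disjoint R P := Finset.disjoint_of_subset_left hR.1 Finset.sdiff_disjoint
      exact Finset.union_sdiff_cancel_right hdisj
  rw [h, Finset.card_powersetCard, Finset.card_sdiff_of_subset (Finset.subset_univ _), Finset.card_univ,
    Fintype.card_fin]

lemma star {n K : ℕ} (hK : 0 < K) (hKn : K < n) (y : Finset (Fin n) → ℝ)
    (hy : ∑ S ∈ (univ : Finset (Fin n)).powersetCard K, y S = 0) :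
    ∑ i : Fin n,
        (∑ S ∈ ((univ : Finset (Fin n)).powersetCard K).filter (fun S => i ∈ S), y S) ^ 2
      ≤ ((n - 2).choose (K - 1) : ℝ) * ∑ S ∈ (univ : Finset (Fin n)).powersetCard K, y S ^ 2 := by
  classical
  set 𝒮 : Finset (Finset (Fin n)) := (univ : Finset (Fin n)).powersetCard K with h𝒮
  set ind : Fin n → Finset (Fin n) → ℝ := fun i S => if i ∈ S then 1 else 0 with hind
  set a : Fin n → ℝ := fun i => ∑ S ∈ 𝒮, ind i S * y S with ha
  set b : Finset (Fin n) → ℝ := fun S => ∑ i : Fin n, ind i S * a i with hb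
  set lam : ℝ := ((n - 2).choose (K - 1) : ℝ) with hlam
  set c₂ : ℝ := if 2 ≤ K then ((n - 2).choose (K - 2) : ℝ) else 0 with hc₂
  -- indicator sum is card of intersection
  have carde : ∀ S T : Finset (Fin n), ∑ i : Fin n, ind i S * ind i T = ((S ∩ T).card : ℝ) := by
    intro S T
    have : ∀ i : Fin n, ind i S * ind i T = if i ∈ S ∩ T then (1 : ℝ) else 0 := by
      intro i; by_cases h1 : i ∈ S <;> by_cases h2 : i ∈ T <;>
        simp [hind, h1, h2, Finset.mem_inter]
    rw [Finset.sum_congr rfl fun i _ => this i, Finset.sum_boole]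
    congr 1
    rw [Finset.filter_mem_eq_inter, Finset.univ_inter]
  have cardS : ∀ S ∈ 𝒮, ∑ i : Fin n, ind i S = (K : ℝ) := by
    intro S hS
    rw [Finset.mem_powersetCard] at hS
    have := carde S S
    simp only [Finset.inter_self] at this
    have h2 : ∀ i : Fin n, ind i S * ind i S = ind i S := by
      intro i; by_cases h : i ∈ S <;> simp [hind, h]
    rw [Finset.sum_congr rfl fun i _ => h2 i] at this
    rw [this, hS.2]
  -- the count lemma
  have hcnt : ∀ i j : Fin n, ∑ S ∈ 𝒮, ind i S * ind j S
      = c₂ + (if i = j then lam else 0) := by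
    intro i j
    have hterm : ∀ S : Finset (Fin n), ind i S * ind j S
        = if i ∈ S ∧ j ∈ S then (1 : ℝ) else 0 := by
      intro S; by_cases h1 : i ∈ S <;> by_cases h2 : j ∈ S <;> simp [hind, h1, h2]
    rw [Finset.sum_congr rfl fun S _ => hterm S, Finset.sum_boole]
    by_cases hij : i = j
    · subst hij
      have : (𝒮.filter fun S => i ∈ S ∧ i ∈ S) = 𝒮.filter fun R => {i} ⊆ R := by
        apply Finset.filter_congr; intro R _; simp
      rw [this, card_filter_superset _ (by simp; omega)]
      simp only [Finset.card_singleton, if_true]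
      rw [hc₂, hlam]
      by_cases hK2 : 2 ≤ K
      · rw [if_pos hK2]
        have : (n - 1).choose (K - 1) = (n - 2).choose (K - 2) + (n - 2).choose (K - 1) := by
          have h1 : n - 1 = (n - 2) + 1 := by omega
          have h2 : K - 1 = (K - 2) + 1 := by omega
          rw [h1, h2, Nat.choose_succ_succ]
        rw [this]; push_cast; ring
      · rw [if_neg hK2]
        have hK1 : K = 1 := by omega
        subst hK1
        simp
    · have : (𝒮.filter fun S => i ∈ S ∧ j ∈ S) = 𝒮.filter fun R => {i, j} ⊆ R := by
        apply Finset.filter_congr; intro R _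
        simp [Finset.insert_subset_iff]
      rw [this, if_neg hij, add_zero]
      by_cases hK2 : 2 ≤ K
      · rw [card_filter_superset _ (by
          rwa [Finset.card_insert_of_notMem (by simpa using hij), Finset.card_singleton])]
        rw [Finset.card_insert_of_notMem (by simpa using hij), Finset.card_singleton, hc₂,
          if_pos hK2]
      · have hK1 : K = 1 := by omega
        have : (𝒮.filter fun R => {i, j} ⊆ R) = ∅ := by
          rw [Finset.filter_eq_empty_iff]
          intro R hR hsub
          rw [h𝒮, Finset.mem_powersetCard] at hR
          have : ({i, j} : Finset (Fin n)).card ≤ R.card := Finset.card_le_card hsub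
          rw [Finset.card_insert_of_notMem (by simpa using hij), Finset.card_singleton,
            hR.2, hK1] at this
          omega
        rw [this, hc₂, if_neg hK2]
        simp
  -- I3
  have I3 : ∀ S : Finset (Fin n), b S = ∑ R ∈ 𝒮, ((S ∩ R).card : ℝ) * y R := by
    intro S
    rw [hb]
    simp only
    calc ∑ i : Fin n, ind i S * a i
        = ∑ i : Fin n, ∑ R ∈ 𝒮, ind i S * ind i R * y R := by
          apply Finset.sum_congr rfl; intro i _
          rw [ha]; simp only
          rw [Finset.mul_sum]; apply Finset.sum_congr rfl; intro R _; ring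
      _ = ∑ R ∈ 𝒮, ∑ i : Fin n, ind i S * ind i R * y R := Finset.sum_comm
      _ = ∑ R ∈ 𝒮, ((S ∩ R).card : ℝ) * y R := by
          apply Finset.sum_congr rfl; intro R _
          rw [← Finset.sum_mul, carde]
  -- I1
  have I1 : ∑ S ∈ 𝒮, y S * b S = ∑ i : Fin n, a i ^ 2 := by
    calc ∑ S ∈ 𝒮, y S * b S
        = ∑ S ∈ 𝒮, ∑ i : Fin n, ind i S * y S * a i := by
          apply Finset.sum_congr rfl; intro S _
          rw [hb]; simp only
          rw [Finset.mul_sum]; apply Finset.sum_congr rfl; intro i _; ring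
      _ = ∑ i : Fin n, ∑ S ∈ 𝒮, ind i S * y S * a i := Finset.sum_comm
      _ = ∑ i : Fin n, a i ^ 2 := by
          apply Finset.sum_congr rfl; intro i _
          rw [← Finset.sum_mul]
          have hai : ∑ S ∈ 𝒮, ind i S * y S = a i := rfl
          rw [hai]; ring
  -- Step A
  have stepA : ∀ R ∈ 𝒮, ∀ T ∈ 𝒮, ∑ S ∈ 𝒮, ((S ∩ R).card : ℝ) * ((S ∩ T).card : ℝ)
      = lam * ((R ∩ T).card : ℝ) + (K : ℝ) ^ 2 * c₂ := by
    intro R hR T hT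
    calc ∑ S ∈ 𝒮, ((S ∩ R).card : ℝ) * ((S ∩ T).card : ℝ)
        = ∑ S ∈ 𝒮, ∑ i : Fin n, ∑ j : Fin n,
            ind i R * ind j T * (ind i S * ind j S) := by
          apply Finset.sum_congr rfl; intro S _
          rw [← carde S R, ← carde S T, Finset.sum_mul_sum]
          apply Finset.sum_congr rfl; intro i _
          apply Finset.sum_congr rfl; intro j _
          ring
      _ = ∑ i : Fin n, ∑ j : Fin n, ind i R * ind j T * ∑ S ∈ 𝒮, ind i S * ind j S := by
          rw [Finset.sum_comm]
          apply Finset.sum_congr rfl; intro i _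
          rw [Finset.sum_comm]
          apply Finset.sum_congr rfl; intro j _
          rw [Finset.mul_sum]
      _ = ∑ i : Fin n, ∑ j : Fin n, ind i R * ind j T * (c₂ + (if i = j then lam else 0)) := by
          apply Finset.sum_congr rfl; intro i _
          apply Finset.sum_congr rfl; intro j _
          rw [hcnt]
      _ = ∑ i : Fin n, (ind i R * (∑ j : Fin n, ind j T) * c₂ + ind i R * ind i T * lam) := by
          apply Finset.sum_congr rfl; intro i _
          rw [Finset.mul_sum]
          have : ∀ j : Fin n, ind i R * ind j T * (c₂ + (if i = j then lam else 0))
              = ind i R * ind j T * c₂ + (if j = i then ind i R * ind i T * lam else 0) := by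
            intro j
            by_cases h : i = j
            · subst h; simp; ring
            · rw [if_neg h, if_neg (Ne.symm h)]; ring
          rw [Finset.sum_congr rfl fun j _ => this j, Finset.sum_add_distrib,
            Finset.sum_ite_eq' univ i fun _ => ind i R * ind i T * lam, if_pos (Finset.mem_univ i),
            ← Finset.sum_mul]
      _ = lam * ((R ∩ T).card : ℝ) + (K : ℝ) ^ 2 * c₂ := by
          have e1 : ∑ i : Fin n, ind i R * (∑ j : Fin n, ind j T) * c₂ = (K : ℝ) ^ 2 * c₂ := by
            rw [← Finset.sum_mul, ← Finset.sum_mul, cardS R hR, cardS T hT]; ring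
          have e2 : ∑ i : Fin n, ind i R * ind i T * lam = lam * ((R ∩ T).card : ℝ) := by
            rw [← Finset.sum_mul, carde R T]; ring
          rw [Finset.sum_add_distrib, e1, e2]
          ring
  -- I2
  have I2 : ∑ S ∈ 𝒮, b S ^ 2 = lam * ∑ i : Fin n, a i ^ 2 := by
    calc ∑ S ∈ 𝒮, b S ^ 2
        = ∑ S ∈ 𝒮, ∑ R ∈ 𝒮, ∑ T ∈ 𝒮,
            y R * y T * (((S ∩ R).card : ℝ) * ((S ∩ T).card : ℝ)) := by
          apply Finset.sum_congr rfl; intro S _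
          rw [sq, I3, Finset.sum_mul_sum]
          apply Finset.sum_congr rfl; intro R _
          apply Finset.sum_congr rfl; intro T _
          ring
      _ = ∑ R ∈ 𝒮, ∑ T ∈ 𝒮, y R * y T * ∑ S ∈ 𝒮, ((S ∩ R).card : ℝ) * ((S ∩ T).card : ℝ) := by
          rw [Finset.sum_comm]
          apply Finset.sum_congr rfl; intro R _
          rw [Finset.sum_comm]
          apply Finset.sum_congr rfl; intro T _
          rw [Finset.mul_sum]
      _ = ∑ R ∈ 𝒮, ∑ T ∈ 𝒮, (lam * (y R * (((R ∩ T).card : ℝ) * y T))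
            + (K : ℝ) ^ 2 * c₂ * (y R * y T)) := by
          apply Finset.sum_congr rfl; intro R hR
          apply Finset.sum_congr rfl; intro T hT
          rw [stepA R hR T hT]
          ring
      _ = lam * ∑ i : Fin n, a i ^ 2 := by
          rw [Finset.sum_congr rfl fun R _ => Finset.sum_add_distrib, Finset.sum_add_distrib]
          have e1 : ∑ R ∈ 𝒮, ∑ T ∈ 𝒮, lam * (y R * (((R ∩ T).card : ℝ) * y T))
              = lam * ∑ i : Fin n, a i ^ 2 := by
            rw [← I1]
            rw [Finset.mul_sum]
            apply Finset.sum_congr rfl; intro R _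
            rw [I3, Finset.mul_sum, Finset.mul_sum]
          have e2 : ∑ R ∈ 𝒮, ∑ T ∈ 𝒮, (K : ℝ) ^ 2 * c₂ * (y R * y T) = 0 := by
            have : ∀ R ∈ 𝒮, ∑ T ∈ 𝒮, (K : ℝ) ^ 2 * c₂ * (y R * y T)
                = (K : ℝ) ^ 2 * c₂ * y R * ∑ T ∈ 𝒮, y T := by
              intro R _
              rw [Finset.mul_sum]
              apply Finset.sum_congr rfl; intro T _; ring
            rw [Finset.sum_congr rfl this]
            simp [hy]
          rw [e1, e2, add_zero]
  -- conclude via Cauchy-Schwarz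
  have hLHS : ∑ i : Fin n,
      (∑ S ∈ 𝒮.filter (fun S => i ∈ S), y S) ^ 2 = ∑ i : Fin n, a i ^ 2 := by
    apply Finset.sum_congr rfl; intro i _
    congr 1
    rw [ha]; simp only
    rw [Finset.sum_filter]
    apply Finset.sum_congr rfl; intro S _
    by_cases h : i ∈ S <;> simp [hind, h]
  rw [hLHS]
  have hCS : (∑ S ∈ 𝒮, y S * b S) ^ 2 ≤ (∑ S ∈ 𝒮, y S ^ 2) * ∑ S ∈ 𝒮, b S ^ 2 :=
    Finset.sum_mul_sq_le_sq_mul_sq 𝒮 y b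
  rw [I1, I2] at hCS
  have hA : (0 : ℝ) ≤ ∑ i : Fin n, a i ^ 2 := Finset.sum_nonneg fun i _ => sq_nonneg _
  have hY : (0 : ℝ) ≤ ∑ S ∈ 𝒮, y S ^ 2 := Finset.sum_nonneg fun S _ => sq_nonneg _
  have hlamnn : (0 : ℝ) ≤ lam := by rw [hlam]; positivity
  rcases eq_or_lt_of_le hA with h0 | h0
  · rw [← h0]; positivity
  · nlinarith [hCS, h0]

open Finset in
theorem subbagging_mean_squared_loo_stability (n k K : ℕ) (hk : 2 ≤ k) (hK : 0 < K)
    (hKn : K < n) (A : Finset (Fin n) → EuclideanSpace ℝ (Fin k))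
    (hA : ∀ S : Finset (Fin n), A S ∈ probSimplex k) :
    (1 / (n : ℝ)) * ∑ i : Fin n,
        ‖subbagWeights A Finset.univ K - subbagWeights A (Finset.univ.erase i) K‖ ^ 2
      ≤ (1 / ((n : ℝ) - 1)) * (((K : ℝ) / n) / (1 - (K : ℝ) / n)) * (1 - 1 / (k : ℝ)) := by
  classical
  have hn2 : 2 ≤ n := by omega
  set 𝒮 : Finset (Finset (Fin n)) := (univ : Finset (Fin n)).powersetCard K with h𝒮
  have hcard𝒮 : 𝒮.card = n.choose K := by
    rw [h𝒮, Finset.card_powersetCard, Finset.card_univ, Fintype.card_fin]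
  set N : ℝ := (n.choose K : ℝ) with hNdef
  set N' : ℝ := ((n - 1).choose K : ℝ) with hN'def
  set lam : ℝ := ((n - 2).choose (K - 1) : ℝ) with hlamdef
  have hNpos : 0 < N := by
    rw [hNdef]; exact_mod_cast Nat.choose_pos (le_of_lt hKn)
  have hN'pos : 0 < N' := by
    rw [hN'def]; exact_mod_cast Nat.choose_pos (by omega : K ≤ n - 1)
  have hlamnn : 0 ≤ lam := by rw [hlamdef]; positivity
  set w : EuclideanSpace ℝ (Fin k) := subbagWeights A Finset.univ K with hwdef
  -- coordinates of subbagWeights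
  have happ : ∀ (I : Finset (Fin n)) (j : Fin k),
      subbagWeights A I K j = ((I.powersetCard K).card : ℝ)⁻¹ * ∑ S ∈ I.powersetCard K, A S j := by
    intro I j
    show (((I.powersetCard K).card : ℝ)⁻¹ • ∑ S ∈ I.powersetCard K, A S) j = _
    rw [PiLp.smul_apply, WithLp.ofLp_sum, Finset.sum_apply, smul_eq_mul]
  have hw : ∀ j : Fin k, w j = N⁻¹ * ∑ S ∈ 𝒮, A S j := by
    intro j; rw [hwdef, happ, hcard𝒮]
  have hsumA : ∀ j : Fin k, ∑ S ∈ 𝒮, A S j = N * w j := by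
    intro j; rw [hw j]; field_simp
  -- erase powersetCard as filter
  have hE : ∀ i : Fin n, (Finset.univ.erase i).powersetCard K = 𝒮.filter (fun S => i ∉ S) := by
    intro i
    ext S
    simp only [Finset.mem_powersetCard, Finset.subset_erase, Finset.mem_filter, h𝒮]
    constructor
    · rintro ⟨⟨h1, h2⟩, h3⟩; exact ⟨⟨h1, h3⟩, h2⟩
    · rintro ⟨⟨h1, h3⟩, h2⟩; exact ⟨⟨h1, h2⟩, h3⟩
  have hcardE : ∀ i : Fin n, (((Finset.univ.erase i).powersetCard K).card : ℝ) = N' := by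
    intro i
    rw [Finset.card_powersetCard, Finset.card_erase_of_mem (Finset.mem_univ i),
      Finset.card_univ, Fintype.card_fin, hN'def]
  set y : Fin k → Finset (Fin n) → ℝ := fun j S => A S j - w j with hydef
  have hy0 : ∀ j : Fin k, ∑ S ∈ 𝒮, y j S = 0 := by
    intro j
    rw [hydef]
    simp only
    rw [Finset.sum_sub_distrib, Finset.sum_const, hcard𝒮, hsumA j, nsmul_eq_mul, ← hNdef]
    ring
  -- coordinate difference
  have hdiff : ∀ (i : Fin n) (j : Fin k),
      w j - subbagWeights A (Finset.univ.erase i) K j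
        = (∑ S ∈ 𝒮.filter (fun S => i ∈ S), y j S) / N' := by
    intro i j
    have h1 : subbagWeights A (Finset.univ.erase i) K j
        = N'⁻¹ * ∑ S ∈ 𝒮.filter (fun S => i ∉ S), A S j := by
      rw [happ, hcardE, hE]
    have hsplit : ∑ S ∈ 𝒮.filter (fun S => i ∈ S), y j S
        + ∑ S ∈ 𝒮.filter (fun S => ¬ i ∈ S), y j S = 0 := by
      rw [Finset.sum_filter_add_sum_filter_not]; exact hy0 j
    have hcardf : ((𝒮.filter (fun S => i ∉ S)).card : ℝ) = N' := by
      rw [← hE]; exact_mod_cast hcardE i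
    have h2 : ∑ S ∈ 𝒮.filter (fun S => i ∉ S), A S j
        = - ∑ S ∈ 𝒮.filter (fun S => i ∈ S), y j S + N' * w j := by
      have : ∑ S ∈ 𝒮.filter (fun S => i ∉ S), A S j
          = ∑ S ∈ 𝒮.filter (fun S => i ∉ S), (y j S + w j) := by
        apply Finset.sum_congr rfl; intro S _; rw [hydef]; simp
      rw [this, Finset.sum_add_distrib, Finset.sum_const, nsmul_eq_mul, hcardf]
      have := hsplit
      linarith
    rw [h1, h2]
    field_simp
    ring
  -- squared norm as coordinate sum
  have hnorm : ∀ v : EuclideanSpace ℝ (Fin k), ‖v‖ ^ 2 = ∑ j : Fin k, (v j) ^ 2 := by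
    intro v
    rw [EuclideanSpace.norm_eq, Real.sq_sqrt (by positivity)]
    apply Finset.sum_congr rfl; intro j _
    rw [Real.norm_eq_abs, sq_abs]
  -- simplex facts
  have hAS2 : ∀ S : Finset (Fin n), ∑ j : Fin k, (A S j) ^ 2 ≤ 1 := by
    intro S
    obtain ⟨hpos, hsum⟩ := hA S
    calc ∑ j : Fin k, (A S j) ^ 2 ≤ ∑ j : Fin k, A S j := by
          apply Finset.sum_le_sum; intro j _
          have h1 : A S j ≤ 1 := by
            have := Finset.single_le_sum (f := fun j => A S j) (fun j _ => hpos j)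
              (Finset.mem_univ j)
            rw [hsum] at this; exact this
          nlinarith [hpos j]
      _ = 1 := hsum
  have hwsum : ∑ j : Fin k, w j = 1 := by
    have e0 : ∑ j : Fin k, w j = N⁻¹ * ∑ j : Fin k, ∑ S ∈ 𝒮, A S j := by
      rw [Finset.mul_sum]
      exact Finset.sum_congr rfl fun j _ => hw j
    have : ∑ j : Fin k, w j = N⁻¹ * ∑ S ∈ 𝒮, ∑ j : Fin k, A S j := by
      rw [e0, Finset.sum_comm]
    rw [this, Finset.sum_congr rfl fun S _ => (hA S).2, Finset.sum_const, hcard𝒮,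
      nsmul_eq_mul, mul_one, ← hNdef]
    field_simp
  have hwsq : 1 ≤ (k : ℝ) * ∑ j : Fin k, (w j) ^ 2 := by
    have hCS := Finset.sum_mul_sq_le_sq_mul_sq Finset.univ (fun j : Fin k => w j)
      (fun _ => (1 : ℝ))
    simp only [mul_one, one_pow, Finset.sum_const, Finset.card_univ, Fintype.card_fin,
      nsmul_eq_mul] at hCS
    rw [hwsum] at hCS
    nlinarith
  -- variance bound
  have hvarj : ∀ j : Fin k, ∑ S ∈ 𝒮, (y j S) ^ 2 = (∑ S ∈ 𝒮, (A S j) ^ 2) - N * (w j) ^ 2 := by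
    intro j
    have h1 : ∀ S : Finset (Fin n), (y j S) ^ 2 = (A S j) ^ 2 - 2 * w j * A S j + (w j) ^ 2 := by
      intro S; rw [hydef]; ring
    rw [Finset.sum_congr rfl fun S _ => h1 S, Finset.sum_add_distrib, Finset.sum_sub_distrib,
      Finset.sum_const, hcard𝒮, nsmul_eq_mul, ← hNdef, ← Finset.mul_sum, hsumA j]
    ring
  have hvar : ∑ j : Fin k, ∑ S ∈ 𝒮, (y j S) ^ 2 ≤ N * (1 - 1 / (k : ℝ)) := by
    have h1 : ∑ j : Fin k, ∑ S ∈ 𝒮, (y j S) ^ 2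
        = (∑ S ∈ 𝒮, ∑ j : Fin k, (A S j) ^ 2) - N * ∑ j : Fin k, (w j) ^ 2 := by
      rw [Finset.sum_congr rfl fun j (_ : j ∈ Finset.univ) => hvarj j,
        Finset.sum_sub_distrib, ← Finset.mul_sum, Finset.sum_comm]
    have h2 : ∑ S ∈ 𝒮, ∑ j : Fin k, (A S j) ^ 2 ≤ N := by
      calc ∑ S ∈ 𝒮, ∑ j : Fin k, (A S j) ^ 2 ≤ ∑ S ∈ 𝒮, (1 : ℝ) :=
            Finset.sum_le_sum fun S _ => hAS2 S
        _ = N := by rw [Finset.sum_const, hcard𝒮, nsmul_eq_mul, mul_one, ← hNdef]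
    have h3 : N * (1 / (k : ℝ)) ≤ N * ∑ j : Fin k, (w j) ^ 2 := by
      apply mul_le_mul_of_nonneg_left _ (le_of_lt hNpos)
      rw [div_le_iff₀ (by positivity : (0:ℝ) < (k:ℝ))]
      nlinarith [hwsq]
    rw [h1]
    nlinarith
  -- key sum bound
  have key : ∑ i : Fin n,
      ‖w - subbagWeights A (Finset.univ.erase i) K‖ ^ 2
        ≤ lam * (N * (1 - 1 / (k : ℝ))) / N' ^ 2 := by
    have step1 : ∀ i : Fin n, ‖w - subbagWeights A (Finset.univ.erase i) K‖ ^ 2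
        = ∑ j : Fin k, (∑ S ∈ 𝒮.filter (fun S => i ∈ S), y j S) ^ 2 / N' ^ 2 := by
      intro i
      rw [hnorm]
      apply Finset.sum_congr rfl; intro j _
      have hsub : (w - subbagWeights A (Finset.univ.erase i) K) j
          = w j - subbagWeights A (Finset.univ.erase i) K j := rfl
      rw [hsub, hdiff i j, div_pow]
    calc ∑ i : Fin n, ‖w - subbagWeights A (Finset.univ.erase i) K‖ ^ 2
        = ∑ i : Fin n, ∑ j : Fin k, (∑ S ∈ 𝒮.filter (fun S => i ∈ S), y j S) ^ 2 / N' ^ 2 :=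
          Finset.sum_congr rfl fun i _ => step1 i
      _ = (∑ j : Fin k, ∑ i : Fin n, (∑ S ∈ 𝒮.filter (fun S => i ∈ S), y j S) ^ 2) / N' ^ 2 := by
          rw [Finset.sum_comm, Finset.sum_div]
          apply Finset.sum_congr rfl; intro j _
          rw [Finset.sum_div]
      _ ≤ (∑ j : Fin k, lam * ∑ S ∈ 𝒮, (y j S) ^ 2) / N' ^ 2 := by
          apply div_le_div_of_nonneg_right _ (by positivity)
          exact Finset.sum_le_sum fun j _ => star hK hKn (y j) (hy0 j)
      _ = lam * (∑ j : Fin k, ∑ S ∈ 𝒮, (y j S) ^ 2) / N' ^ 2 := by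
          rw [← Finset.mul_sum]
      _ ≤ lam * (N * (1 - 1 / (k : ℝ))) / N' ^ 2 := by
          apply div_le_div_of_nonneg_right _ (by positivity)
          exact mul_le_mul_of_nonneg_left hvar hlamnn
  -- numeric identities
  have hn1 : (0 : ℝ) < (n : ℝ) - 1 := by
    have : (2 : ℝ) ≤ (n : ℝ) := by exact_mod_cast hn2
    linarith
  have hnK : (0 : ℝ) < (n : ℝ) - (K : ℝ) := by
    have : (K : ℝ) < (n : ℝ) := by exact_mod_cast hKn
    linarith
  have e2 : ((n : ℝ) - 1) * lam = (K : ℝ) * N' := by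
    have hnat : (n - 1) * ((n - 2).choose (K - 1)) = ((n - 1).choose K) * K := by
      have h := Nat.add_one_mul_choose_eq (n - 2) (K - 1)
      have h1 : n - 2 + 1 = n - 1 := by omega
      have h2 : K - 1 + 1 = K := by omega
      rw [h1, h2] at h
      exact h
    rw [hlamdef, hN'def]
    have : (((n - 1 : ℕ) : ℝ)) * ((n - 2).choose (K - 1) : ℝ)
        = (((n - 1).choose K : ℕ) : ℝ) * (K : ℝ) := by exact_mod_cast congrArg (Nat.cast (R := ℝ)) hnat
    rw [Nat.cast_sub (by omega : 1 ≤ n)] at this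
    push_cast at this ⊢
    linarith
  have e1 : (n : ℝ) * N' = N * ((n : ℝ) - (K : ℝ)) := by
    have hnat : ((n - 1).choose K) * n = n.choose K * (n - K) := by
      have h := Nat.choose_mul_succ_eq (n - 1) K
      have h1 : (n - 1) + 1 = n := by omega
      rw [h1] at h
      exact h
    rw [hN'def, hNdef]
    have : (((n - 1).choose K : ℕ) : ℝ) * (n : ℝ)
        = ((n.choose K : ℕ) : ℝ) * (((n - K : ℕ)) : ℝ) := by exact_mod_cast congrArg (Nat.cast (R := ℝ)) hnat
    rw [Nat.cast_sub (le_of_lt hKn)] at this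
    push_cast at this ⊢
    linarith
  have hq : lam * N * (((n : ℝ) - 1) * ((n : ℝ) - (K : ℝ))) = (K : ℝ) * ((n : ℝ) * N' ^ 2) := by
    linear_combination (N * ((n : ℝ) - (K : ℝ))) * e2 - ((K : ℝ) * N') * e1
  have h1mK : 1 - (K : ℝ) / n = ((n : ℝ) - (K : ℝ)) / n := by
    field_simp
  have hN'ne : N' ≠ 0 := ne_of_gt hN'pos
  have hnne : (n : ℝ) ≠ 0 := by positivity
  have hfinal : lam * (N * (1 - 1 / (k : ℝ))) / N' ^ 2 * (1 / (n : ℝ))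
      = (1 / ((n : ℝ) - 1)) * (((K : ℝ) / n) / (1 - (K : ℝ) / n)) * (1 - 1 / (k : ℝ)) := by
    rw [h1mK]
    have hkne : (k : ℝ) ≠ 0 := by positivity
    field_simp
    linear_combination ((k : ℝ) - 1) * hq
  calc (1 / (n : ℝ)) * ∑ i : Fin n,
        ‖subbagWeights A Finset.univ K - subbagWeights A (Finset.univ.erase i) K‖ ^ 2
      ≤ (1 / (n : ℝ)) * (lam * (N * (1 - 1 / (k : ℝ))) / N' ^ 2) :=
        mul_le_mul_of_nonneg_left key (by positivity)
    _ = (1 / ((n : ℝ) - 1)) * (((K : ℝ) / n) / (1 - (K : ℝ) / n)) * (1 - 1 / (k : ℝ)) := by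
        rw [← hfinal]; ring

end Aux
end
end
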